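/- Consider the Norton-Sakuma algebra of type 2A: the 3-dimensional commutative real algebra with basis a_t, a_g, a_ρ where each basis vector is idempotent and a_t·a_g = (1/8)(a_t + a_g − a_ρ), a_t·a_ρ = (1/8)(a_t + a_ρ − a_g), a_g·a_ρ = (1/8)(a_g + a_ρ − a_t). Then the spectrum of the adjoint map ad_{a_t} is exactly {0, 1, 1/4}, each eigenvalue being simple. -/

import Mathlib

open Module

theorem spectrum_2A_axis
    (mul : (Fin 3 → ℝ) →ₗ[ℝ] (Fin 3 → ℝ) →ₗ[ℝ] (Fin 3 → ℝ))
    (hcomm : ∀ u v, mul u v = mul v u)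
    (e : Fin 3 → (Fin 3 → ℝ)) (he : ∀ i, e i = Pi.single i 1)
    (hidem : ∀ i, mul (e i) (e i) = e i)
    (h01 : mul (e 0) (e 1) = (1/8 : ℝ) • (e 0 + e 1 - e 2))
    (h02 : mul (e 0) (e 2) = (1/8 : ℝ) • (e 0 + e 2 - e 1))
    (h12 : mul (e 1) (e 2) = (1/8 : ℝ) • (e 1 + e 2 - e 0)) :
    (∀ μ : ℝ, Module.End.HasEigenvalue (mul (e 0)) μ ↔ μ ∈ ({0, 1, 1/4} : Set ℝ)) ∧
    (∀ μ ∈ ({0, 1, 1/4} : Set ℝ),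
      Module.finrank ℝ (Module.End.eigenspace (mul (e 0)) μ) = 1) := by
  have hA : ∀ v : Fin 3 → ℝ, mul (e 0) v =
      ![v 0 + (v 1 + v 2)/8, (v 1 - v 2)/8, (v 2 - v 1)/8] := by
    intro v
    have hv : v = v 0 • e 0 + v 1 • e 1 + v 2 • e 2 := by
      funext i
      fin_cases i <;> simp [he, Pi.single_apply]
    calc mul (e 0) v = mul (e 0) (v 0 • e 0 + v 1 • e 1 + v 2 • e 2) := by rw [← hv]
    _ = _ := by
      simp only [map_add, map_smul, hidem, h01, h02]
      funext i
      fin_cases i <;>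
        simp [he, Pi.single_apply] <;> ring
  have key : ∀ (μ : ℝ) (v : Fin 3 → ℝ), mul (e 0) v = μ • v ↔
      (v 0 + (v 1 + v 2)/8 = μ * v 0 ∧ (v 1 - v 2)/8 = μ * v 1 ∧
        (v 2 - v 1)/8 = μ * v 2) := by
    intro μ v
    rw [hA]
    constructor
    · intro h
      refine ⟨?_, ?_, ?_⟩
      · simpa using congrFun h 0
      · simpa using congrFun h 1
      · simpa using congrFun h 2
    · rintro ⟨h0, h1, h2⟩
      funext i
      fin_cases i <;> simp [h0, h1, h2]
  -- solve the eigenvector equations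
  have solve : ∀ (μ : ℝ) (v : Fin 3 → ℝ), mul (e 0) v = μ • v →
      μ ≠ 0 → μ ≠ 1/4 → (v 1 = 0 ∧ v 2 = 0 ∧ (μ ≠ 1 → v 0 = 0)) := by
    intro μ v hv hμ0 hμ4
    obtain ⟨h0, h1, h2⟩ := (key μ v).mp hv
    have hsum : μ * (v 1 + v 2) = 0 := by linarith
    have h12' : v 1 + v 2 = 0 := by
      rcases mul_eq_zero.mp hsum with h | h
      · exact absurd h hμ0
      · exact h
    have hv1 : v 1 = 0 := by
      have : (μ - 1/4) * v 1 = 0 := by linarith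
      rcases mul_eq_zero.mp this with h | h
      · exact absurd (by linarith : μ = 1/4) hμ4
      · exact h
    have hv2 : v 2 = 0 := by linarith
    refine ⟨hv1, hv2, fun hμ1 => ?_⟩
    have : (μ - 1) * v 0 = 0 := by
      rw [hv1, hv2] at h0; linarith
    rcases mul_eq_zero.mp this with h | h
    · exact absurd (by linarith : μ = 1) hμ1
    · exact h
  have hw0 : mul (e 0) ![-1, 4, 4] = (0 : ℝ) • ![-1, 4, 4] :=
    (key 0 ![-1, 4, 4]).mpr (by norm_num [Matrix.cons_val_two, Matrix.tail_cons, Matrix.head_cons])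
  have hw1 : mul (e 0) ![1, 0, 0] = (1 : ℝ) • ![1, 0, 0] :=
    (key 1 ![1, 0, 0]).mpr (by norm_num [Matrix.cons_val_two, Matrix.tail_cons, Matrix.head_cons])
  have hw2 : mul (e 0) ![0, 1, -1] = (1/4 : ℝ) • ![0, 1, -1] :=
    (key (1/4) ![0, 1, -1]).mpr (by norm_num [Matrix.cons_val_two, Matrix.tail_cons, Matrix.head_cons])
  have hw0ne : (![-1, 4, 4] : Fin 3 → ℝ) ≠ 0 := by
    intro h; have := congrFun h 1; norm_num at this
  have hw1ne : (![1, 0, 0] : Fin 3 → ℝ) ≠ 0 := by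
    intro h; have := congrFun h 0; norm_num at this
  have hw2ne : (![0, 1, -1] : Fin 3 → ℝ) ≠ 0 := by
    intro h; have := congrFun h 1; norm_num at this
  -- eigenspaces are spans of single vectors
  have hes0 : Module.End.eigenspace (mul (e 0)) 0 = Submodule.span ℝ {![-1, 4, 4]} := by
    apply le_antisymm
    · intro v hv
      have hv' : mul (e 0) v = (0 : ℝ) • v := Module.End.mem_eigenspace_iff.mp hv
      obtain ⟨h0, h1, h2⟩ := (key 0 v).mp hv'
      rw [Submodule.mem_span_singleton]
      refine ⟨-(v 0), ?_⟩
      funext i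
      fin_cases i <;> simp <;> linarith
    · rw [Submodule.span_le, Set.singleton_subset_iff]
      exact Module.End.mem_eigenspace_iff.mpr hw0
  have hes1 : Module.End.eigenspace (mul (e 0)) 1 = Submodule.span ℝ {![1, 0, 0]} := by
    apply le_antisymm
    · intro v hv
      have hv' : mul (e 0) v = (1 : ℝ) • v := Module.End.mem_eigenspace_iff.mp hv
      obtain ⟨hv1, hv2, -⟩ := solve 1 v hv' (by norm_num) (by norm_num)
      rw [Submodule.mem_span_singleton]
      refine ⟨v 0, ?_⟩
      funext i
      fin_cases i <;> simp [hv1, hv2]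
    · rw [Submodule.span_le, Set.singleton_subset_iff]
      exact Module.End.mem_eigenspace_iff.mpr hw1
  have hes2 : Module.End.eigenspace (mul (e 0)) (1/4) = Submodule.span ℝ {![0, 1, -1]} := by
    apply le_antisymm
    · intro v hv
      have hv' : mul (e 0) v = (1/4 : ℝ) • v := Module.End.mem_eigenspace_iff.mp hv
      obtain ⟨h0, h1, h2⟩ := (key (1/4) v).mp hv'
      rw [Submodule.mem_span_singleton]
      refine ⟨v 1, ?_⟩
      funext i
      fin_cases i <;> simp <;> linarith
    · rw [Submodule.span_le, Set.singleton_subset_iff]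
      exact Module.End.mem_eigenspace_iff.mpr hw2
  constructor
  · intro μ
    constructor
    · intro h
      obtain ⟨v, hv, hvne⟩ := h.exists_hasEigenvector
      have hv' : mul (e 0) v = μ • v := Module.End.mem_eigenspace_iff.mp hv
      by_contra hμ
      simp only [Set.mem_insert_iff, Set.mem_singleton_iff, not_or] at hμ
      obtain ⟨hμ0, hμ1, hμ4⟩ := hμ
      obtain ⟨hv1, hv2, hv0⟩ := solve μ v hv' hμ0 hμ4
      apply hvne
      funext i
      fin_cases i <;> simp [hv1, hv2, hv0 hμ1]
    · intro hμ
      rcases hμ with h | h | h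
      · subst h
        exact Module.End.hasEigenvalue_of_hasEigenvector ⟨Module.End.mem_eigenspace_iff.mpr hw0, hw0ne⟩
      · subst h
        exact Module.End.hasEigenvalue_of_hasEigenvector ⟨Module.End.mem_eigenspace_iff.mpr hw1, hw1ne⟩
      · simp only [Set.mem_singleton_iff] at h
        subst h
        exact Module.End.hasEigenvalue_of_hasEigenvector ⟨Module.End.mem_eigenspace_iff.mpr hw2, hw2ne⟩
  · intro μ hμ
    rcases hμ with h | h | h
    · subst h; rw [hes0]; exact finrank_span_singleton hw0ne
    · subst h; rw [hes1]; exact finrank_span_singleton hw1ne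
    · simp only [Set.mem_singleton_iff] at h
      subst h; rw [hes2]; exact finrank_span_singleton hw2ne
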